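/- Let X have the Beta distribution with parameters a, b > 0 and mean m = a/(a+b). Then for every u ∈ [m, 1), P(X ≥ u) ≤ exp(−(a+b)·kl(m, u)). -/

import Mathlib

open MeasureTheory
open scoped ENNReal

/-- The Beta distribution with parameters `a, b > 0`: the probability measure on `[0,1] ⊆ ℝ`
with density `x^(a−1)·(1−x)^(b−1)/B(a,b)`, where `B(a,b) = Γ(a)·Γ(b)/Γ(a+b)`. -/
noncomputable def betaMeasure (a b : ℝ) : Measure ℝ :=
  (volume.restrict (Set.Icc (0 : ℝ) 1)).withDensity fun x =>
    ENNReal.ofReal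
      (x ^ (a - 1) * (1 - x) ^ (b - 1) / (Real.Gamma a * Real.Gamma b / Real.Gamma (a + b)))

/-- For `p, q ∈ (0,1)`, `kl(p, q) = p·log(p/q) + (1−p)·log((1−p)/(1−q))`;
note that `kl(p, p) = 0` holds automatically. -/
noncomputable def klBer (p q : ℝ) : ℝ :=
  p * Real.log (p / q) + (1 - p) * Real.log ((1 - p) / (1 - q))

namespace Stmt17Aux

open Set Real

lemma intInt_right {a b : ℝ} (ha : 0 < a) (hb : 0 < b) {u v : ℝ} (hu : 0 < u) (huv : u ≤ v)
    (hv : v ≤ 1) :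
    IntervalIntegrable (fun x => x ^ (a - 1) * (1 - x) ^ (b - 1)) volume u v := by
  have h1 : IntervalIntegrable (fun x : ℝ => (1 - x) ^ (b - 1)) volume u v := by
    have h0 : IntervalIntegrable (fun t : ℝ => t ^ (b - 1)) volume (1 - u) (1 - v) :=
      intervalIntegral.intervalIntegrable_rpow' (by linarith)
    simpa using h0.comp_sub_left 1
  refine h1.continuousOn_mul ?_
  rw [Set.uIcc_of_le huv]
  intro x hx
  exact (Real.continuousAt_rpow_const x (a - 1)
    (Or.inl (ne_of_gt (lt_of_lt_of_le hu hx.1)))).continuousWithinAt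

lemma intInt_left {a b : ℝ} (ha : 0 < a) (hb : 0 < b) {v : ℝ} (h0 : 0 ≤ v) (hv : v < 1) :
    IntervalIntegrable (fun x => x ^ (a - 1) * (1 - x) ^ (b - 1)) volume 0 v := by
  have h1 : IntervalIntegrable (fun x : ℝ => x ^ (a - 1)) volume 0 v :=
    intervalIntegral.intervalIntegrable_rpow' (by linarith)
  refine h1.mul_continuousOn ?_
  rw [Set.uIcc_of_le h0]
  intro x hx
  have hc : ContinuousAt (fun x : ℝ => (1 - x) ^ (b - 1)) x := by
    exact (Real.continuousAt_rpow_const (1 - x) (b - 1)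
      (Or.inl (by have := hx.2; intro h; nlinarith))).comp
      ((continuous_const.sub continuous_id).continuousAt)
  exact hc.continuousWithinAt

lemma realBeta {a b : ℝ} (ha : 0 < a) (hb : 0 < b) :
    ∫ x in (0:ℝ)..1, x ^ (a - 1) * (1 - x) ^ (b - 1)
      = Real.Gamma a * Real.Gamma b / Real.Gamma (a + b) := by
  have hc := Complex.Gamma_mul_Gamma_eq_betaIntegral (s := (a : ℂ)) (t := (b : ℂ))
    (by simpa using ha) (by simpa using hb)
  have heq : Complex.betaIntegral a b
      = ((∫ x in (0:ℝ)..1, x ^ (a - 1) * (1 - x) ^ (b - 1) : ℝ) : ℂ) := by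
    rw [Complex.betaIntegral, ← intervalIntegral.integral_ofReal]
    apply intervalIntegral.integral_congr
    intro x hx
    rw [Set.uIcc_of_le (zero_le_one)] at hx
    show (x:ℂ) ^ ((a:ℂ) - 1) * (1 - (x:ℂ)) ^ ((b:ℂ) - 1) = ((x ^ (a - 1) * (1 - x) ^ (b - 1) : ℝ) : ℂ)
    rw [Complex.ofReal_mul, Complex.ofReal_cpow hx.1,
      Complex.ofReal_cpow (by linarith [hx.2] : (0:ℝ) ≤ 1 - x)]
    push_cast
    ring
  rw [heq] at hc
  have hG : Real.Gamma (a + b) ≠ 0 := (Real.Gamma_pos_of_pos (by linarith)).ne'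
  have : Real.Gamma a * Real.Gamma b
      = Real.Gamma (a + b) * ∫ x in (0:ℝ)..1, x ^ (a - 1) * (1 - x) ^ (b - 1) := by
    have := hc
    rw [← Complex.ofReal_add, Complex.Gamma_ofReal, Complex.Gamma_ofReal,
      Complex.Gamma_ofReal] at this
    exact_mod_cast this
  field_simp [this]
  rw [this]; ring

lemma ftcP {a b : ℝ} (ha : 0 < a) (hb : 0 < b) {u v : ℝ} (hu : 0 < u) (huv : u ≤ v)
    (hv : v ≤ 1) :
    ∫ x in u..v, x ^ (a - 1) * (1 - x) ^ (b - 1) * (a - (a + b) * x)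
      = v ^ a * (1 - v) ^ b - u ^ a * (1 - u) ^ b := by
  apply intervalIntegral.integral_eq_sub_of_hasDeriv_right_of_le huv
  · have c1 : ContinuousOn (fun x : ℝ => x ^ a) (Icc u v) := fun x hx =>
      (Real.continuousAt_rpow_const x a (Or.inl (ne_of_gt (lt_of_lt_of_le hu hx.1)))).continuousWithinAt
    have c2 : ContinuousOn (fun x : ℝ => (1 - x) ^ b) (Icc u v) := fun x hx =>
      (((Real.continuousAt_rpow_const (1 - x) b (Or.inr hb.le))).comp
        ((continuous_const.sub continuous_id).continuousAt)).continuousWithinAt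
    exact c1.mul c2
  · intro x hx
    have hx0 : 0 < x := lt_of_le_of_lt hu.le hx.1
    have hx1 : x < 1 := lt_of_lt_of_le hx.2 hv
    have h1x : (1:ℝ) - x ≠ 0 := by linarith
    have h1 : HasDerivAt (fun y : ℝ => y ^ a) (a * x ^ (a - 1)) x :=
      Real.hasDerivAt_rpow_const (Or.inl hx0.ne')
    have h2 : HasDerivAt (fun y : ℝ => (1 - y) ^ b) (b * (1 - x) ^ (b - 1) * (-1)) x := by
      have hinner : HasDerivAt (fun y : ℝ => 1 - y) (-1) x := (hasDerivAt_id x).const_sub 1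
      exact (Real.hasDerivAt_rpow_const (p := b) (Or.inl h1x)).comp x hinner
    have hmul := h1.mul h2
    have e1 : x ^ a = x ^ (a - 1) * x := by
      rw [← Real.rpow_add_one hx0.ne' (a - 1)]; norm_num
    have e2 : (1 - x) ^ b = (1 - x) ^ (b - 1) * (1 - x) := by
      rw [← Real.rpow_add_one h1x (b - 1)]; norm_num
    have : a * x ^ (a - 1) * (1 - x) ^ b + x ^ a * (b * (1 - x) ^ (b - 1) * (-1))
        = x ^ (a - 1) * (1 - x) ^ (b - 1) * (a - (a + b) * x) := by
      rw [e1, e2]; ring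
    exact (this ▸ hmul).hasDerivWithinAt
  · exact (intInt_right ha hb hu huv hv).mul_continuousOn
      ((continuous_const.sub (continuous_const.mul continuous_id)).continuousOn)

lemma key {a b : ℝ} (ha : 0 < a) (hb : 0 < b) {u : ℝ} (hm : a / (a + b) ≤ u) (hu1 : u < 1) :
    ∫ x in u..1, x ^ (a - 1) * (1 - x) ^ (b - 1)
      ≤ (Real.Gamma a * Real.Gamma b / Real.Gamma (a + b)) * (u ^ a * (1 - u) ^ b)
        / ((a / (a + b)) ^ a * (1 - a / (a + b)) ^ b) := by
  have hab : 0 < a + b := by linarith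
  set m := a / (a + b) with hmdef
  set B := Real.Gamma a * Real.Gamma b / Real.Gamma (a + b) with hBdef
  set C := m ^ a * (1 - m) ^ b with hCdef
  have hm0 : 0 < m := div_pos ha hab
  have hm1 : m < 1 := (div_lt_one hab).mpr (by linarith)
  have hu0 : 0 < u := lt_of_lt_of_le hm0 hm
  have hB : 0 < B := div_pos (mul_pos (Real.Gamma_pos_of_pos ha) (Real.Gamma_pos_of_pos hb))
    (Real.Gamma_pos_of_pos hab)
  have hC : 0 < C := mul_pos (Real.rpow_pos_of_pos hm0 a) (Real.rpow_pos_of_pos (by linarith) b)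
  have hBC : 0 < B / C := div_pos hB hC
  have eCB : C / B * (B / C) = 1 := by field_simp
  have hP1 : (1 : ℝ) ^ a * (1 - 1) ^ b = 0 := by
    norm_num [Real.zero_rpow hb.ne']
  have hgcont : Continuous fun x : ℝ => ((a + b) * x - a) * (B / C) :=
    ((continuous_const.mul continuous_id).sub continuous_const).mul continuous_const
  have hre : ∀ x : ℝ, x ^ (a - 1) * (1 - x) ^ (b - 1) * (((a + b) * x - a) * (B / C))
      = x ^ (a - 1) * (1 - x) ^ (b - 1) * (a - (a + b) * x) * (-(B / C)) := fun x => by ring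
  by_cases hcase : (a + C / B) / (a + b) ≤ u
  · -- pointwise f ≤ g on [u,1]
    have hcomp : ∀ x ∈ Icc u 1, x ^ (a - 1) * (1 - x) ^ (b - 1)
        ≤ x ^ (a - 1) * (1 - x) ^ (b - 1) * (((a + b) * x - a) * (B / C)) := by
      intro x hx
      have hfx : 0 ≤ x ^ (a - 1) * (1 - x) ^ (b - 1) :=
        mul_nonneg (Real.rpow_nonneg (le_trans hu0.le hx.1) _)
          (Real.rpow_nonneg (by linarith [hx.2]) _)
      have h1 : C / B ≤ (a + b) * x - a := by
        have hx0 : (a + C / B) / (a + b) ≤ x := le_trans hcase hx.1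
        rw [div_le_iff₀ hab] at hx0
        linarith
      have h2 := mul_le_mul_of_nonneg_left (mul_le_mul_of_nonneg_right h1 hBC.le) hfx
      calc x ^ (a - 1) * (1 - x) ^ (b - 1)
          = x ^ (a - 1) * (1 - x) ^ (b - 1) * (C / B * (B / C)) := by rw [eCB, mul_one]
        _ ≤ _ := h2
    have i1 := intervalIntegral.integral_mono_on hu1.le
      (intInt_right ha hb hu0 hu1.le le_rfl)
      ((intInt_right ha hb hu0 hu1.le le_rfl).mul_continuousOn hgcont.continuousOn) hcomp
    have i2 : ∫ x in u..1, x ^ (a - 1) * (1 - x) ^ (b - 1) * (((a + b) * x - a) * (B / C))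
        = B * (u ^ a * (1 - u) ^ b) / C := by
      simp only [hre]
      rw [intervalIntegral.integral_mul_const, ftcP ha hb hu0 hu1.le le_rfl, hP1]
      ring
    rw [i2] at i1
    exact i1
  · push_neg at hcase
    have hcomp : ∀ x ∈ Icc m u, x ^ (a - 1) * (1 - x) ^ (b - 1) * (((a + b) * x - a) * (B / C))
        ≤ x ^ (a - 1) * (1 - x) ^ (b - 1) := by
      intro x hx
      have hfx : 0 ≤ x ^ (a - 1) * (1 - x) ^ (b - 1) :=
        mul_nonneg (Real.rpow_nonneg (le_trans hm0.le hx.1) _)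
          (Real.rpow_nonneg (by nlinarith [hx.2]) _)
      have h1 : (a + b) * x - a ≤ C / B := by
        have hxu : x ≤ u := hx.2
        rw [lt_div_iff₀ hab] at hcase
        nlinarith
      have h2 := mul_le_mul_of_nonneg_left (mul_le_mul_of_nonneg_right h1 hBC.le) hfx
      calc x ^ (a - 1) * (1 - x) ^ (b - 1) * (((a + b) * x - a) * (B / C))
          ≤ x ^ (a - 1) * (1 - x) ^ (b - 1) * (C / B * (B / C)) := h2
        _ = x ^ (a - 1) * (1 - x) ^ (b - 1) := by rw [eCB, mul_one]
    have i1 := intervalIntegral.integral_mono_on hm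
      ((intInt_right ha hb hm0 hm hu1.le).mul_continuousOn hgcont.continuousOn)
      (intInt_right ha hb hm0 hm hu1.le) hcomp
    have i2 : ∫ x in m..u, x ^ (a - 1) * (1 - x) ^ (b - 1) * (((a + b) * x - a) * (B / C))
        = (C - u ^ a * (1 - u) ^ b) * (B / C) := by
      simp only [hre]
      rw [intervalIntegral.integral_mul_const, ftcP ha hb hm0 hm hu1.le]
      ring
    have add1 := intervalIntegral.integral_add_adjacent_intervals
      (intInt_right ha hb hm0 hm hu1.le) (intInt_right ha hb hu0 hu1.le le_rfl)
      (f := fun x => x ^ (a - 1) * (1 - x) ^ (b - 1)) (μ := volume)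
    have add2 := intervalIntegral.integral_add_adjacent_intervals
      (intInt_left ha hb hm0.le hm1) (intInt_right ha hb hm0 hm1.le le_rfl)
      (f := fun x => x ^ (a - 1) * (1 - x) ^ (b - 1)) (μ := volume)
    have hnn : 0 ≤ ∫ x in (0:ℝ)..m, x ^ (a - 1) * (1 - x) ^ (b - 1) := by
      apply intervalIntegral.integral_nonneg hm0.le
      intro x hx
      exact mul_nonneg (Real.rpow_nonneg hx.1 _) (Real.rpow_nonneg (by nlinarith [hx.2]) _)
    have htot := realBeta ha hb
    rw [i2] at i1
    have eC : (C - u ^ a * (1 - u) ^ b) * (B / C) = B - B * (u ^ a * (1 - u) ^ b) / C := by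
      field_simp
    rw [eC] at i1
    linarith [add1, add2, hnn, htot]

lemma expEq {a b : ℝ} (ha : 0 < a) (hb : 0 < b) {u : ℝ} (hm : a / (a + b) ≤ u) (hu1 : u < 1) :
    Real.exp (-(a + b) * klBer (a / (a + b)) u)
      = u ^ a * (1 - u) ^ b / ((a / (a + b)) ^ a * (1 - a / (a + b)) ^ b) := by
  have hab : 0 < a + b := by linarith
  set m := a / (a + b) with hmdef
  have hm0 : 0 < m := div_pos ha hab
  have hm1 : m < 1 := (div_lt_one hab).mpr (by linarith)
  have hu0 : 0 < u := lt_of_lt_of_le hm0 hm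
  have h1u : 0 < 1 - u := by linarith
  have h1m : 0 < 1 - m := by linarith
  have e1 : (a + b) * m = a := by rw [hmdef]; field_simp
  have e2 : (a + b) * (1 - m) = b := by rw [hmdef]; field_simp; ring
  have harg : -(a + b) * klBer m u = a * Real.log (u / m) + b * Real.log ((1 - u) / (1 - m)) := by
    rw [klBer, Real.log_div hm0.ne' hu0.ne', Real.log_div h1m.ne' h1u.ne',
      Real.log_div hu0.ne' hm0.ne', Real.log_div h1u.ne' h1m.ne']
    linear_combination (Real.log u - Real.log m) * e1 + (Real.log (1 - u) - Real.log (1 - m)) * e2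
  rw [harg, Real.exp_add, ← Real.log_rpow (div_pos hu0 hm0) a,
    ← Real.log_rpow (div_pos h1u h1m) b, Real.exp_log (Real.rpow_pos_of_pos (div_pos hu0 hm0) a),
    Real.exp_log (Real.rpow_pos_of_pos (div_pos h1u h1m) b),
    Real.div_rpow hu0.le hm0.le, Real.div_rpow h1u.le h1m.le]
  rw [div_mul_div_comm]

end Stmt17Aux

open Stmt17Aux in
/-- Let `X` have the Beta distribution with parameters `a, b > 0` and mean
`m = a/(a+b)`. Then for every `u ∈ [m, 1)`, `P(X ≥ u) ≤ exp(−(a+b)·kl(m, u))`. -/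
theorem stmt17 (a b : ℝ) (ha : 0 < a) (hb : 0 < b) (u : ℝ)
    (hu : u ∈ Set.Ico (a / (a + b)) 1) :
    betaMeasure a b {x | u ≤ x} ≤
      ENNReal.ofReal (Real.exp (-(a + b) * klBer (a / (a + b)) u)) := by
  obtain ⟨hm, hu1⟩ := hu
  have hab : 0 < a + b := by linarith
  have hm0 : 0 < a / (a + b) := div_pos ha hab
  have hu0 : 0 < u := lt_of_lt_of_le hm0 hm
  have hB : 0 < Real.Gamma a * Real.Gamma b / Real.Gamma (a + b) :=
    div_pos (mul_pos (Real.Gamma_pos_of_pos ha) (Real.Gamma_pos_of_pos hb))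
      (Real.Gamma_pos_of_pos hab)
  have hset : Set.Ici u ∩ Set.Icc (0:ℝ) 1 = Set.Icc u 1 := by
    ext x
    simp only [Set.mem_inter_iff, Set.mem_Ici, Set.mem_Icc]
    constructor
    · rintro ⟨h1, _, h3⟩; exact ⟨h1, h3⟩
    · rintro ⟨h1, h2⟩; exact ⟨h1, le_trans hu0.le h1, h2⟩
  have hmeas : betaMeasure a b {x | u ≤ x}
      = ∫⁻ x in Set.Ioc u 1, ENNReal.ofReal
          (x ^ (a - 1) * (1 - x) ^ (b - 1) / (Real.Gamma a * Real.Gamma b / Real.Gamma (a + b)))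
          ∂volume := by
    rw [betaMeasure, show {x : ℝ | u ≤ x} = Set.Ici u from rfl, withDensity_apply _ (measurableSet_Ici (a := u)),
      Measure.restrict_restrict measurableSet_Ici, hset,
      Measure.restrict_congr_set Ioc_ae_eq_Icc.symm]
  rw [hmeas]
  have hint : IntegrableOn
      (fun x => x ^ (a - 1) * (1 - x) ^ (b - 1) / (Real.Gamma a * Real.Gamma b / Real.Gamma (a + b)))
      (Set.Ioc u 1) volume := by
    have := ((intInt_right ha hb hu0 hu1.le le_rfl).div_const
      (Real.Gamma a * Real.Gamma b / Real.Gamma (a + b)))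
    rw [intervalIntegrable_iff, Set.uIoc_of_le hu1.le] at this
    exact this
  rw [← ofReal_integral_eq_lintegral_ofReal hint]
  · apply ENNReal.ofReal_le_ofReal
    have hieq : ∫ x in Set.Ioc u 1,
        x ^ (a - 1) * (1 - x) ^ (b - 1) / (Real.Gamma a * Real.Gamma b / Real.Gamma (a + b))
        = (∫ x in u..1, x ^ (a - 1) * (1 - x) ^ (b - 1))
          / (Real.Gamma a * Real.Gamma b / Real.Gamma (a + b)) := by
      rw [MeasureTheory.integral_div, intervalIntegral.integral_of_le hu1.le]
    rw [hieq, expEq ha hb hm hu1, div_le_iff₀ hB]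
    have := key ha hb hm hu1
    calc (∫ x in u..1, x ^ (a - 1) * (1 - x) ^ (b - 1))
        ≤ (Real.Gamma a * Real.Gamma b / Real.Gamma (a + b)) * (u ^ a * (1 - u) ^ b)
          / ((a / (a + b)) ^ a * (1 - a / (a + b)) ^ b) := this
      _ = u ^ a * (1 - u) ^ b / ((a / (a + b)) ^ a * (1 - a / (a + b)) ^ b)
          * (Real.Gamma a * Real.Gamma b / Real.Gamma (a + b)) := by ring
  · apply Filter.eventually_of_mem (self_mem_ae_restrict measurableSet_Ioc)
    intro x hx
    exact div_nonneg (mul_nonneg (Real.rpow_nonneg (le_trans hu0.le hx.1.le) _)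
      (Real.rpow_nonneg (by linarith [hx.2]) _)) hB.le
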